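/- Consider one iteration of Algorithm 1 with constant ratio β_k ≡ β > 0 and δ ∈ (0,1]: given x^k ∈ X, y^{k−1}, and σ_{k−1} > 0, suppose y^k = prox_{σ_{k−1} f*}(y^{k−1} + σ_{k−1}Kx^k), θ_k = σ_k/σ_{k−1} with σ_k > 0, τ_k = βσ_k, ȳ^k = y^k + θ_k(y^k − y^{k−1}), x^{k+1} = prox^{M_k}_{τ_k g}( x^k − τ_k M_k^{−1}K*ȳ^k − τ_k M_k^{−1}∇h(x^k) ) with M_k ∈ S_α(X), y^{k+1} = prox_{σ_k f*}(y^k + σ_k K x^{k+1}), and the line-search condition τ_kσ_k‖Kx^{k+1} − Kx^k‖² + 2τ_k( h(x^{k+1}) − h(x^k) − ⟨∇h(x^k), x^{k+1} − x^k⟩ ) ≤ δ‖x^{k+1} − x^k‖²_{M_k} holds. Then for any saddle point (x̂, ŷ): ½‖y^k − ŷ‖² + (1/(2β))‖x^k − x̂‖²_{M_k} − ((1−δ)/(2β))‖x^{k+1} − x^k‖²_{M_k} + σ_kθ_k D_{x̂,ŷ}(y^{k−1}) − ½‖ȳ^k − y^k‖² ≥ σ_k( P_{x̂,ŷ}(x^{k+1})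 + (1+θ_k)D_{x̂,ŷ}(y^k) ) + ½‖ŷ − y^{k+1}‖² + (1/(2β))‖x̂ − x^{k+1}‖²_{M_k}. -/

import Mathlib

open scoped RealInnerProductSpace

/-- Convexity for extended-real-valued functions. -/
def ERealConvexOn {X : Type*} [AddCommGroup X] [Module ℝ X] (g : X → EReal) : Prop :=
  ∀ ⦃u v : X⦄ ⦃a b : ℝ⦄, 0 ≤ a → 0 ≤ b → a + b = 1 →
    g (a • u + b • v) ≤ (a : EReal) * g u + (b : EReal) * g v

/-- `p = prox^Q_{τg}(w)`: `p` minimizes `z ↦ g(z) + (1/(2τ))‖z − w‖²_Q`. -/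
def IsProxPt {E : Type*} [NormedAddCommGroup E] [InnerProductSpace ℝ E]
    (Q : E →L[ℝ] E) (τ : ℝ) (g : E → EReal) (w p : E) : Prop :=
  ∀ z : E,
    g p + ((1 / (2 * τ) * ⟪Q (p - w), p - w⟫ : ℝ) : EReal)
      ≤ g z + ((1 / (2 * τ) * ⟪Q (z - w), z - w⟫ : ℝ) : EReal)

/-- The value `⟨Kx, y⟩ + g(x) + h(x) − f*(y)` of the saddle-point problem. -/
noncomputable def saddleVal {X Y : Type*}
    [NormedAddCommGroup X] [InnerProductSpace ℝ X]
    [NormedAddCommGroup Y] [InnerProductSpace ℝ Y]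
    (K : X →L[ℝ] Y) (g : X → EReal) (h : X → ℝ) (fs : Y → EReal)
    (x : X) (y : Y) : EReal :=
  ((⟪K x, y⟫ : ℝ) : EReal) + g x + ((h x : ℝ) : EReal) - fs y

/-- `(xh, yh)` is a saddle point. -/
def IsSaddlePoint {X Y : Type*}
    [NormedAddCommGroup X] [InnerProductSpace ℝ X]
    [NormedAddCommGroup Y] [InnerProductSpace ℝ Y]
    (K : X →L[ℝ] Y) (g : X → EReal) (h : X → ℝ) (fs : Y → EReal)
    (xh : X) (yh : Y) : Prop :=
  ∀ (x : X) (y : Y),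
    saddleVal K g h fs xh y ≤ saddleVal K g h fs xh yh ∧
    saddleVal K g h fs xh yh ≤ saddleVal K g h fs x yh

/-- Primal gap function `P_{xh,yh}`. -/
noncomputable def Pgap {X Y : Type*}
    [NormedAddCommGroup X] [InnerProductSpace ℝ X] [FiniteDimensional ℝ X]
    [NormedAddCommGroup Y] [InnerProductSpace ℝ Y] [FiniteDimensional ℝ Y]
    (K : X →L[ℝ] Y) (g : X → EReal) (h : X → ℝ) (xh : X) (yh : Y) (x : X) : EReal :=
  g x + ((h x : ℝ) : EReal) - g xh - ((h xh : ℝ) : EReal)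
    + ((⟪(ContinuousLinearMap.adjoint K) yh, x - xh⟫ : ℝ) : EReal)

/-- Dual gap function `D_{xh,yh}`. -/
noncomputable def Dgap {X Y : Type*}
    [NormedAddCommGroup X] [InnerProductSpace ℝ X]
    [NormedAddCommGroup Y] [InnerProductSpace ℝ Y]
    (K : X →L[ℝ] Y) (fs : Y → EReal) (xh : X) (yh : Y) (y : Y) : EReal :=
  fs y - fs yh - ((⟪K xh, y - yh⟫ : ℝ) : EReal)

open scoped Topology

lemma aux_small (a b c : ℝ) (hc : 0 ≤ c) (H : ∀ t : ℝ, 0 < t → t ≤ 1 → a ≤ b + t * c) : a ≤ b := by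
  by_contra hab
  push_neg at hab
  have hba : 0 < a - b := by linarith
  set t : ℝ := min 1 ((a - b) / (2 * (c + 1))) with ht
  have ht0 : 0 < t := lt_min one_pos (by positivity)
  have ht1 : t ≤ 1 := min_le_left _ _
  have h2 : t * c ≤ ((a - b) / (2 * (c + 1))) * c :=
    mul_le_mul_of_nonneg_right (min_le_right _ _) hc
  have h3 : ((a - b) / (2 * (c + 1))) * c < a - b := by
    rw [div_mul_eq_mul_div, div_lt_iff₀ (by positivity)]
    nlinarith
  have := H t ht0 ht1
  linarith

lemma prox_ne_top {E : Type*} [NormedAddCommGroup E] [InnerProductSpace ℝ E]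
    (Q : E →L[ℝ] E) (τ : ℝ) (g : E → EReal) (w p : E)
    (hp : IsProxPt Q τ g w p) (z0 : E) (hz0 : g z0 ≠ ⊤) : g p ≠ ⊤ := by
  intro htop
  have h1 := hp z0
  rw [htop, EReal.top_add_coe] at h1
  have h2 : g z0 + ((1 / (2 * τ) * ⟪Q (z0 - w), z0 - w⟫ : ℝ) : EReal) < ⊤ :=
    EReal.add_lt_top (lt_top_iff_ne_top.2 hz0).ne (EReal.coe_ne_top _)
  exact absurd (top_le_iff.mp h1) h2.ne

lemma prox_subgrad {E : Type*} [NormedAddCommGroup E] [InnerProductSpace ℝ E]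
    (Q : E →L[ℝ] E) (hQ : ∀ u v : E, ⟪Q u, v⟫ = ⟪u, Q v⟫)
    (hQpos : ∀ z : E, 0 ≤ ⟪Q z, z⟫)
    (τ : ℝ) (hτ : 0 < τ) (g : E → EReal) (hconv : ERealConvexOn g)
    (w p z : E) (hp : IsProxPt Q τ g w p)
    (Gp Gz : ℝ) (hgp : g p = (Gp : EReal)) (hgz : g z = (Gz : EReal)) :
    τ * (Gp - Gz) ≤ ⟪Q (z - p), p - w⟫ := by
  set X := ⟪Q (z - p), p - w⟫ with hX
  set Y := ⟪Q (z - p), z - p⟫ with hY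
  have hY0 : 0 ≤ Y := hQpos _
  apply aux_small _ _ (Y / 2) (by positivity)
  intro t ht0 ht1
  have hzt : p + t • (z - p) = (1 - t) • p + t • z := by module
  have hconvt := hconv (u := p) (v := z) (by linarith : (0:ℝ) ≤ 1 - t) (le_of_lt ht0)
    (by ring)
  rw [hgp, hgz, ← EReal.coe_mul, ← EReal.coe_mul, ← EReal.coe_add] at hconvt
  have hquad : ⟪Q (p + t • (z - p) - w), p + t • (z - p) - w⟫
      = ⟪Q (p - w), p - w⟫ + 2 * t * X + t ^ 2 * Y := by
    have h1 : p + t • (z - p) - w = (p - w) + t • (z - p) := by abel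
    have h2 : ⟪Q (p - w), z - p⟫ = X := by rw [hX, hQ]; exact real_inner_comm _ _
    rw [h1]
    simp only [map_add, map_smul, inner_add_left, inner_add_right,
      real_inner_smul_left, real_inner_smul_right, h2, ← hX, ← hY]
    ring
  have hmin' := hp (p + t • (z - p))
  rw [hgp, hquad, hzt] at hmin'
  have hchain := hmin'.trans (add_le_add hconvt le_rfl)
  rw [← EReal.coe_add, ← EReal.coe_add] at hchain
  have hreal : Gp + 1 / (2 * τ) * ⟪Q (p - w), p - w⟫
      ≤ ((1 - t) * Gp + t * Gz) + 1 / (2 * τ) * (⟪Q (p - w), p - w⟫ + 2 * t * X + t ^ 2 * Y) := by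
    exact_mod_cast hchain
  have ht' : t * (Gp - Gz) ≤ 1 / (2 * τ) * (2 * t * X + t ^ 2 * Y) := by linarith
  have h5 : τ * (t * (Gp - Gz)) ≤ τ * (1 / (2 * τ) * (2 * t * X + t ^ 2 * Y)) :=
    mul_le_mul_of_nonneg_left ht' hτ.le
  have h6 : τ * (1 / (2 * τ) * (2 * t * X + t ^ 2 * Y)) = t * (X + t * (Y / 2)) := by
    field_simp
  rw [h6] at h5
  exact le_of_mul_le_mul_left (by linarith [h5]) ht0

lemma convex_grad_ineq {E : Type*} [NormedAddCommGroup E] [InnerProductSpace ℝ E]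
    [CompleteSpace E]
    (h : E → ℝ) (hconv : ConvexOn ℝ Set.univ h) {x p : E} (hg : HasGradientAt h p x)
    (y : E) : ⟪p, y - x⟫ ≤ h y - h x := by
  set φ : ℝ → ℝ := fun t => h (x + t • (y - x)) with hφ
  have hcurve : HasDerivAt (fun t : ℝ => x + t • (y - x)) (y - x) 0 := by
    simpa using ((hasDerivAt_id (0:ℝ)).smul_const (y - x)).const_add x
  have hφd : HasDerivAt φ ⟪p, y - x⟫ 0 := by
    have hx0 : HasFDerivAt h ((InnerProductSpace.toDual ℝ E) p)
        ((fun t : ℝ => x + t • (y - x)) 0) := by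
      simpa using hg.hasFDerivAt
    have := hx0.comp_hasDerivAt 0 hcurve
    exact this
  have hslope : Filter.Tendsto (slope φ 0) (𝓝[>] 0) (𝓝 ⟪p, y - x⟫) :=
    (hasDerivAt_iff_tendsto_slope.mp hφd).mono_left
      (nhdsWithin_mono 0 (fun t ht => ne_of_gt ht))
  refine le_of_tendsto hslope ?_
  filter_upwards [Ioc_mem_nhdsGT (zero_lt_one)] with t ht
  have ht0 : 0 < t := ht.1
  have ht1 : t ≤ 1 := ht.2
  have hcvx := hconv.2 (Set.mem_univ x) (Set.mem_univ y)
    (by linarith : (0:ℝ) ≤ 1 - t) ht0.le (by ring)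
  have hco : (1 - t) • x + t • y = x + t • (y - x) := by module
  rw [hco] at hcvx
  have hφt : φ t ≤ (1 - t) * h x + t * h y := by simpa [φ, smul_eq_mul] using hcvx
  have : slope φ 0 t = (φ t - φ 0) / t := by simp [slope]; ring
  rw [this]
  have hφ0 : φ 0 = h x := by simp [φ]
  rw [div_le_iff₀ ht0, hφ0]
  nlinarith

/-- The key one-iteration descent inequality for Algorithm 1 with
constant ratio `β` and tolerance `δ ∈ (0,1]`. -/
theorem one_iteration_descent_inequality
    {X Y : Type*} [NormedAddCommGroup X] [InnerProductSpace ℝ X] [FiniteDimensional ℝ X]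
    [NormedAddCommGroup Y] [InnerProductSpace ℝ Y] [FiniteDimensional ℝ Y]
    (K : X →L[ℝ] Y)
    (g : X → EReal)
    (hgbot : ∀ z : X, g z ≠ ⊥) (hgtop : ∃ z : X, g z ≠ ⊤)
    (hglsc : LowerSemicontinuous g) (hgconv : ERealConvexOn g)
    (fs : Y → EReal)
    (hfbot : ∀ z : Y, fs z ≠ ⊥) (hftop : ∃ z : Y, fs z ≠ ⊤)
    (hflsc : LowerSemicontinuous fs) (hfconv : ERealConvexOn fs)
    (h : X → ℝ) (h' : X → X) (L : ℝ)
    (hhconv : ConvexOn ℝ Set.univ h)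
    (hgrad : ∀ z : X, HasGradientAt h (h' z) z)
    (hLip : ∀ u v : X, ‖h' u - h' v‖ ≤ L * ‖u - v‖)
    (α β δ : ℝ) (hα : 0 < α) (hβ : 0 < β) (hδ : δ ∈ Set.Ioc (0 : ℝ) 1)
    (Mk Mkinv : X →L[ℝ] X)
    (hMsa : ∀ u v : X, ⟪Mk u, v⟫ = ⟪u, Mk v⟫)
    (hMα : ∀ z : X, α * ‖z‖ ^ 2 ≤ ⟪Mk z, z⟫)
    (hMinv1 : Mk.comp Mkinv = ContinuousLinearMap.id ℝ X)
    (hMinv2 : Mkinv.comp Mk = ContinuousLinearMap.id ℝ X)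
    (σkm1 σk θk τk : ℝ) (hσkm1 : 0 < σkm1) (hσk : 0 < σk)
    (hθk : θk = σk / σkm1) (hτk : τk = β * σk)
    (xk xk1 : X) (ykm1 yk ybk yk1 : Y)
    (hy : IsProxPt (1 : Y →L[ℝ] Y) σkm1 fs (ykm1 + σkm1 • K xk) yk)
    (hybk : ybk = yk + θk • (yk - ykm1))
    (hx : IsProxPt Mk τk g
      (xk - τk • Mkinv ((ContinuousLinearMap.adjoint K) ybk) - τk • Mkinv (h' xk)) xk1)
    (hy1 : IsProxPt (1 : Y →L[ℝ] Y) σk fs (yk + σk • K xk1) yk1)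
    (hls : τk * σk * ‖K xk1 - K xk‖ ^ 2
        + 2 * τk * (h xk1 - h xk - ⟪h' xk, xk1 - xk⟫)
        ≤ δ * ⟪Mk (xk1 - xk), xk1 - xk⟫)
    (xh : X) (yh : Y)
    (hsaddle : IsSaddlePoint K g h fs xh yh) :
    (σk : EReal) * (Pgap K g h xh yh xk1 + ((1 + θk : ℝ) : EReal) * Dgap K fs xh yh yk)
        + ((1 / 2 * ‖yh - yk1‖ ^ 2 + 1 / (2 * β) * ⟪Mk (xh - xk1), xh - xk1⟫ : ℝ) : EReal)
      ≤ ((1 / 2 * ‖yk - yh‖ ^ 2 + 1 / (2 * β) * ⟪Mk (xk - xh), xk - xh⟫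
            - (1 - δ) / (2 * β) * ⟪Mk (xk1 - xk), xk1 - xk⟫ : ℝ) : EReal)
        + ((σk * θk : ℝ) : EReal) * Dgap K fs xh yh ykm1
        - ((1 / 2 * ‖ybk - yk‖ ^ 2 : ℝ) : EReal) := by
  obtain ⟨z0, hz0⟩ := hgtop
  obtain ⟨w0, hw0⟩ := hftop
  have hθpos : 0 < θk := by rw [hθk]; positivity
  have hδ0 : 0 < δ := hδ.1
  have hMinv_app : ∀ z : X, Mk (Mkinv z) = z := fun z => by
    have := ContinuousLinearMap.ext_iff.mp hMinv1 z
    simpa using this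
  have hMpos : ∀ z : X, 0 ≤ ⟪Mk z, z⟫ := fun z => le_trans (by positivity) (hMα z)
  -- finiteness
  have hgx1top : g xk1 ≠ ⊤ := prox_ne_top Mk τk g _ xk1 hx z0 hz0
  have hfyktop : fs yk ≠ ⊤ := prox_ne_top 1 σkm1 fs _ yk hy w0 hw0
  have hfyk1top : fs yk1 ≠ ⊤ := prox_ne_top 1 σk fs _ yk1 hy1 w0 hw0
  have hfyhtop : fs yh ≠ ⊤ := by
    intro htop
    have h1 := (hsaddle xh w0).1
    have hbot : saddleVal K g h fs xh yh = ⊥ := by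
      simp only [saddleVal, htop]
      rw [sub_eq_add_neg, EReal.neg_top, EReal.add_bot]
    rw [hbot, le_bot_iff] at h1
    simp only [saddleVal, sub_eq_add_neg] at h1
    rcases EReal.add_eq_bot_iff.mp h1 with h2 | h2
    · rcases EReal.add_eq_bot_iff.mp h2 with h3 | h3
      · rcases EReal.add_eq_bot_iff.mp h3 with h4 | h4
        · exact EReal.coe_ne_bot _ h4
        · exact hgbot xh h4
      · exact EReal.coe_ne_bot _ h3
    · exact hw0 (by simpa using EReal.neg_eq_bot_iff.mp h2)
  obtain ⟨Fyh, hFyh⟩ : ∃ r : ℝ, fs yh = (r : EReal) :=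
    ⟨_, (EReal.coe_toReal hfyhtop (hfbot yh)).symm⟩
  obtain ⟨Gz0, hGz0⟩ : ∃ r : ℝ, g z0 = (r : EReal) :=
    ⟨_, (EReal.coe_toReal hz0 (hgbot z0)).symm⟩
  have hgxhtop : g xh ≠ ⊤ := by
    intro htop
    have h2 := (hsaddle z0 yh).2
    have hTT : saddleVal K g h fs xh yh = ⊤ := by
      simp only [saddleVal, htop]
      rw [EReal.coe_add_top, EReal.top_add_coe, sub_eq_add_neg]
      refine EReal.top_add_of_ne_bot ?_
      simp only [ne_eq, EReal.neg_eq_bot_iff]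
      exact hfyhtop
    rw [hTT, top_le_iff] at h2
    simp only [saddleVal, hGz0, hFyh] at h2
    rw [← EReal.coe_add, ← EReal.coe_add, ← EReal.coe_sub] at h2
    exact EReal.coe_ne_top _ h2
  obtain ⟨Gxh, hGxh⟩ : ∃ r : ℝ, g xh = (r : EReal) :=
    ⟨_, (EReal.coe_toReal hgxhtop (hgbot xh)).symm⟩
  obtain ⟨Gx1, hGx1⟩ : ∃ r : ℝ, g xk1 = (r : EReal) :=
    ⟨_, (EReal.coe_toReal hgx1top (hgbot xk1)).symm⟩
  obtain ⟨Fyk, hFyk⟩ : ∃ r : ℝ, fs yk = (r : EReal) :=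
    ⟨_, (EReal.coe_toReal hfyktop (hfbot yk)).symm⟩
  obtain ⟨Fyk1, hFyk1⟩ : ∃ r : ℝ, fs yk1 = (r : EReal) :=
    ⟨_, (EReal.coe_toReal hfyk1top (hfbot yk1)).symm⟩
  -- case split on fs ykm1
  by_cases hkm : fs ykm1 = ⊤
  · -- right-hand side is ⊤
    have hD : Dgap K fs xh yh ykm1 = ⊤ := by
      simp only [Dgap, hkm, hFyh]
      rw [EReal.top_sub_coe, EReal.top_sub_coe]
    rw [hD]
    have h1 : ((σk * θk : ℝ) : EReal) * ⊤ = ⊤ := EReal.coe_mul_top_of_pos (by positivity)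
    rw [h1, EReal.coe_add_top, EReal.top_sub_coe]
    exact le_top
  obtain ⟨Fykm1, hFykm1⟩ : ∃ r : ℝ, fs ykm1 = (r : EReal) :=
    ⟨_, (EReal.coe_toReal hkm (hfbot ykm1)).symm⟩
  have hσe : σk = θk * σkm1 := by rw [hθk]; field_simp
  subst hτk
  subst hσe
  subst hybk
  simp only [Pgap, Dgap, hGx1, hGxh, hFyk, hFyh, hFykm1]
  norm_cast
  -- ingredient inequalities
  have hτpos : 0 < β * (θk * σkm1) := by positivity
  have hA0 := prox_subgrad Mk hMsa hMpos (β * (θk * σkm1)) hτpos g hgconv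
      _ xk1 xh hx Gx1 Gxh hGx1 hGxh
  have hw1 : xk1 - (xk - (β * (θk * σkm1)) • Mkinv ((ContinuousLinearMap.adjoint K)
        (yk + θk • (yk - ykm1))) - (β * (θk * σkm1)) • Mkinv (h' xk))
      = (xk1 - xk) + (β * (θk * σkm1)) • Mkinv ((ContinuousLinearMap.adjoint K)
        (yk + θk • (yk - ykm1))) + (β * (θk * σkm1)) • Mkinv (h' xk) := by
    module
  have hcol1 : ⟪Mk (xh - xk1), Mkinv ((ContinuousLinearMap.adjoint K)
      (yk + θk • (yk - ykm1)))⟫ = ⟪yk + θk • (yk - ykm1), K (xh - xk1)⟫ := by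
    rw [hMsa, hMinv_app, ContinuousLinearMap.adjoint_inner_right]
    exact real_inner_comm _ _
  have hcol2 : ⟪Mk (xh - xk1), Mkinv (h' xk)⟫ = ⟪h' xk, xh - xk1⟫ := by
    rw [hMsa, hMinv_app]; exact real_inner_comm _ _
  rw [hw1, inner_add_right, inner_add_right, real_inner_smul_right,
    real_inner_smul_right, hcol1, hcol2] at hA0
  have hone : ∀ u v : Y, ⟪(1 : Y →L[ℝ] Y) u, v⟫ = ⟪u, (1 : Y →L[ℝ] Y) v⟫ := by
    intro u v; simp
  have honepos : ∀ z : Y, 0 ≤ ⟪(1 : Y →L[ℝ] Y) z, z⟫ := by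
    intro z; simp only [ContinuousLinearMap.one_apply]; exact real_inner_self_nonneg
  have hB0 := prox_subgrad (1 : Y →L[ℝ] Y) hone honepos (θk * σkm1) (by positivity)
      fs hfconv _ yk1 yh hy1 Fyk1 Fyh hFyk1 hFyh
  have hC10 := prox_subgrad (1 : Y →L[ℝ] Y) hone honepos σkm1 hσkm1
      fs hfconv _ yk yk1 hy Fyk Fyk1 hFyk hFyk1
  have hC30 := prox_subgrad (1 : Y →L[ℝ] Y) hone honepos σkm1 hσkm1
      fs hfconv _ yk ykm1 hy Fyk Fykm1 hFyk hFykm1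
  simp only [ContinuousLinearMap.one_apply] at hB0 hC10 hC30
  have hgr := convex_grad_ineq h hhconv (hgrad xk) xh
  have hSQ : (0:ℝ) ≤ β * ⟪(θk * σkm1) • (K xk1 - K xk) - (yk1 - (yk + θk • (yk - ykm1))),
      (θk * σkm1) • (K xk1 - K xk) - (yk1 - (yk + θk • (yk - ykm1)))⟫ :=
    mul_nonneg hβ.le real_inner_self_nonneg
  -- scaled versions
  have hA2 := mul_le_mul_of_nonneg_left hA0 (by norm_num : (0:ℝ) ≤ 2)
  have hgr2 := mul_le_mul_of_nonneg_left hgr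
    (by positivity : (0:ℝ) ≤ 2 * β * (θk * σkm1))
  have hB2 := mul_le_mul_of_nonneg_left hB0 (by positivity : (0:ℝ) ≤ 2 * β)
  have hC12 := mul_le_mul_of_nonneg_left hC10 (by positivity : (0:ℝ) ≤ 2 * β * θk)
  have hC32 := mul_le_mul_of_nonneg_left hC30 (by positivity : (0:ℝ) ≤ 2 * β * θk ^ 2)
  -- clear denominators in the goal
  rw [← mul_le_mul_iff_right₀ (show (0:ℝ) < 2 * β by positivity)]
  have h2β : (2 * β) ≠ 0 := by positivity
  ring_nf
  simp only [← mul_assoc, mul_inv_cancel₀ (ne_of_gt hβ), one_mul]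
  -- expand all inner products
  simp only [← real_inner_self_eq_norm_sq, ContinuousLinearMap.adjoint_inner_left,
    map_sub, map_add, map_smul, inner_sub_left, inner_sub_right, inner_add_left,
    inner_add_right, real_inner_smul_left, real_inner_smul_right]
    at hA2 hgr2 hls hB2 hC12 hC32 hSQ ⊢
  -- symmetry facts
  have c1 : ⟪yh, K xh⟫ = ⟪K xh, yh⟫ := real_inner_comm _ _
  have c2 : ⟪yh, K xk⟫ = ⟪K xk, yh⟫ := real_inner_comm _ _
  have c3 : ⟪yh, K xk1⟫ = ⟪K xk1, yh⟫ := real_inner_comm _ _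
  have c4 : ⟪yk, K xh⟫ = ⟪K xh, yk⟫ := real_inner_comm _ _
  have c5 : ⟪yk, K xk⟫ = ⟪K xk, yk⟫ := real_inner_comm _ _
  have c6 : ⟪yk, K xk1⟫ = ⟪K xk1, yk⟫ := real_inner_comm _ _
  have c7 : ⟪yk1, K xh⟫ = ⟪K xh, yk1⟫ := real_inner_comm _ _
  have c8 : ⟪yk1, K xk⟫ = ⟪K xk, yk1⟫ := real_inner_comm _ _
  have c9 : ⟪yk1, K xk1⟫ = ⟪K xk1, yk1⟫ := real_inner_comm _ _
  have c10 : ⟪ykm1, K xh⟫ = ⟪K xh, ykm1⟫ := real_inner_comm _ _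
  have c11 : ⟪ykm1, K xk⟫ = ⟪K xk, ykm1⟫ := real_inner_comm _ _
  have c12 : ⟪ykm1, K xk1⟫ = ⟪K xk1, ykm1⟫ := real_inner_comm _ _
  have d1 : ⟪yh, yk⟫ = ⟪yk, yh⟫ := real_inner_comm _ _
  have d2 : ⟪yh, yk1⟫ = ⟪yk1, yh⟫ := real_inner_comm _ _
  have d3 : ⟪yh, ykm1⟫ = ⟪ykm1, yh⟫ := real_inner_comm _ _
  have d4 : ⟪yk, yk1⟫ = ⟪yk1, yk⟫ := real_inner_comm _ _
  have d5 : ⟪yk, ykm1⟫ = ⟪ykm1, yk⟫ := real_inner_comm _ _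
  have d6 : ⟪yk1, ykm1⟫ = ⟪ykm1, yk1⟫ := real_inner_comm _ _
  have d7 : ⟪K xk, K xk1⟫ = ⟪K xk1, K xk⟫ := real_inner_comm _ _
  have d8 : ⟪K xh, K xk⟫ = ⟪K xk, K xh⟫ := real_inner_comm _ _
  have d9 : ⟪K xh, K xk1⟫ = ⟪K xk1, K xh⟫ := real_inner_comm _ _
  have m1 : ⟪Mk xh, xk⟫ = ⟪Mk xk, xh⟫ := by rw [hMsa]; exact real_inner_comm _ _
  have m2 : ⟪Mk xh, xk1⟫ = ⟪Mk xk1, xh⟫ := by rw [hMsa]; exact real_inner_comm _ _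
  have m3 : ⟪Mk xk, xk1⟫ = ⟪Mk xk1, xk⟫ := by rw [hMsa]; exact real_inner_comm _ _
  have p1 : ⟪xh, h' xk⟫ = ⟪h' xk, xh⟫ := real_inner_comm _ _
  have p2 : ⟪xk, h' xk⟫ = ⟪h' xk, xk⟫ := real_inner_comm _ _
  have p3 : ⟪xk1, h' xk⟫ = ⟪h' xk, xk1⟫ := real_inner_comm _ _
  simp only [c1, c2, c3, c4, c5, c6, c7, c8, c9, c10, c11, c12, d1, d2, d3, d4, d5,
    d6, d7, d8, d9, m1, m2, m3, p1, p2, p3] at hA2 hgr2 hls hB2 hC12 hC32 hSQ ⊢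
  linarith [hA2, hgr2, hls, hB2, hC12, hC32, hSQ]
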